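/- Let Γ₁ be a connected highly-regular graph which is not a distance-regular graph, and let Γ₂ be a connected highly-regular graph. Then the Cartesian product Γ₁ □ Γ₂ is a connected highly-regular graph which is not a distance-regular graph. -/

import Mathlib

/-- A partition of the vertex set (encoded as a cell-assignment map `P : V → Fin m`)
witnessing that `C` is a collapsed adjacency matrix at the vertex `u`:
the cell of index `0` is exactly `{u}`, every cell is nonempty, and every vertex in
cell `j` has exactly `C i j` neighbours in cell `i`. -/
def IsWitnessingPartition {V : Type*} [Fintype V] (G : SimpleGraph V) {m : ℕ}
    (C : Fin m → Fin m → ℕ) (u : V) (P : V → Fin m) : Prop :=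
  (∀ v : V, (P v : ℕ) = 0 ↔ v = u) ∧
  (∀ t : Fin m, ∃ v : V, P v = t) ∧
  (∀ (i j : Fin m) (y : V), P y = j → {z : V | P z = i ∧ G.Adj y z}.ncard = C i j)

/-- `C` is a collapsed adjacency matrix (CAM) of size `m` for `G`: `2 ≤ m`, `m < n`
(with `m = n` allowed only when `n = 2`), and every vertex admits a witnessing partition. -/
def IsCAM {V : Type*} [Fintype V] (G : SimpleGraph V) {m : ℕ}
    (C : Fin m → Fin m → ℕ) : Prop :=
  2 ≤ m ∧ (m < Fintype.card V ∨ (m = Fintype.card V ∧ Fintype.card V = 2)) ∧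
  ∀ u : V, ∃ P : V → Fin m, IsWitnessingPartition G C u P

/-- A graph is highly-regular if it admits some CAM. -/
def IsHighlyRegular {V : Type*} [Fintype V] (G : SimpleGraph V) : Prop :=
  ∃ (m : ℕ) (C : Fin m → Fin m → ℕ), IsCAM G C

/-- The index of a highly-regular graph: the least size of a CAM. -/
noncomputable def hrIndex {V : Type*} [Fintype V] (G : SimpleGraph V) : ℕ :=
  sInf {m : ℕ | ∃ C : Fin m → Fin m → ℕ, IsCAM G C}

/-- A connected graph is distance-regular if the numbers `|D_1(v) ∩ D_{i-1}(u)|`,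
`|D_1(v) ∩ D_i(u)|`, `|D_1(v) ∩ D_{i+1}(u)|` depend only on `i = d(u,v)`. -/
def IsDistanceRegular {V : Type*} [Fintype V] (G : SimpleGraph V) : Prop :=
  G.Connected ∧ ∀ i : ℕ, 1 ≤ i → i ≤ G.diam →
    ∀ j : ℕ, j = i - 1 ∨ j = i ∨ j = i + 1 →
    ∀ u v x y : V, G.dist u v = i → G.dist x y = i →
      {w : V | G.Adj v w ∧ G.dist u w = j}.ncard =
      {w : V | G.Adj y w ∧ G.dist x w = j}.ncard

section aux
open SimpleGraph
set_option linter.unusedSectionVars false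
set_option maxHeartbeats 1000000
variable {V : Type*} {W : Type*} [Fintype V] [Fintype W]
variable {G : SimpleGraph V} {H : SimpleGraph W}

lemma boxProd_walk_le (hG : G.Connected) (hH : H.Connected) {p q : V × W}
    (w : (G.boxProd H).Walk p q) : G.dist p.1 q.1 + H.dist p.2 q.2 ≤ w.length := by
  induction w with
  | nil => simp
  | @cons a b c h w ih =>
    rw [SimpleGraph.Walk.length_cons]
    rcases (SimpleGraph.boxProd_adj).mp h with ⟨hadj, heq⟩ | ⟨hadj, heq⟩
    · have h1 : G.dist a.1 c.1 ≤ G.dist a.1 b.1 + G.dist b.1 c.1 := hG.dist_triangle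
      have h2 : G.dist a.1 b.1 ≤ 1 := by simpa using SimpleGraph.dist_le hadj.toWalk
      have h3 : H.dist a.2 c.2 = H.dist b.2 c.2 := by rw [heq]
      omega
    · have h1 : H.dist a.2 c.2 ≤ H.dist a.2 b.2 + H.dist b.2 c.2 := hH.dist_triangle
      have h2 : H.dist a.2 b.2 ≤ 1 := by simpa using SimpleGraph.dist_le hadj.toWalk
      have h3 : G.dist a.1 c.1 = G.dist b.1 c.1 := by rw [heq]
      omega

lemma boxProd_dist (hG : G.Connected) (hH : H.Connected) (p q : V × W) :
    (G.boxProd H).dist p q = G.dist p.1 q.1 + H.dist p.2 q.2 := by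
  refine le_antisymm ?_ ?_
  · obtain ⟨w1, hw1⟩ := hG.exists_walk_length_eq_dist p.1 q.1
    obtain ⟨w2, hw2⟩ := hH.exists_walk_length_eq_dist p.2 q.2
    have hle := SimpleGraph.dist_le ((w1.boxProdLeft H p.2).append (w2.boxProdRight G q.1))
    have hl1 : (w1.boxProdLeft H p.2).length = w1.length := SimpleGraph.Walk.length_map _ _
    have hl2 : (w2.boxProdRight G q.1).length = w2.length := SimpleGraph.Walk.length_map _ _
    rw [SimpleGraph.Walk.length_append, hl1, hl2] at hle
    simp only [SimpleGraph.Walk.length_append, SimpleGraph.Walk.boxProdLeft,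
      SimpleGraph.Walk.boxProdRight, SimpleGraph.Walk.length_map, hw1, hw2] at hle
    simpa using hle
  · obtain ⟨w, hw⟩ := (hG.boxProd hH).exists_walk_length_eq_dist p q
    rw [← hw]
    exact boxProd_walk_le hG hH w

lemma ncard_pair_union {A : Set V} {B : Set W} {v : V} {w : W} (h : v ∉ A) :
    ((fun z => ((z, w) : V × W)) '' A ∪ (fun x => ((v, x) : V × W)) '' B).ncard
      = A.ncard + B.ncard := by
  rw [Set.ncard_union_eq, Set.ncard_image_of_injective, Set.ncard_image_of_injective]
  · exact fun a b hab => by simpa using hab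
  · exact fun a b hab => by simpa using hab
  · rw [Set.disjoint_left]
    rintro p ⟨z, hz, rfl⟩ ⟨x, hx, hx2⟩
    obtain ⟨h1, h2⟩ := Prod.mk.injEq .. ▸ hx2
    exact h (h1 ▸ hz)

lemma nbhd_split (hG : G.Connected) (hH : H.Connected) (u v : V) (w : W) (i j : ℕ)
    (hd : G.dist u v = i) :
    {p : V × W | (G.boxProd H).Adj (v, w) p ∧ (G.boxProd H).dist (u, w) p = j}
      = ((fun z => ((z, w) : V × W)) '' {z | G.Adj v z ∧ G.dist u z = j}) ∪
        ((fun x => ((v, x) : V × W)) '' {x | H.Adj w x ∧ i + H.dist w x = j}) := by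
  ext ⟨a, b⟩
  simp only [Set.mem_setOf_eq, SimpleGraph.boxProd_adj, Set.mem_union, Set.mem_image,
    Prod.mk.injEq]
  rw [boxProd_dist hG hH]
  constructor
  · rintro ⟨⟨hadj, hb⟩ | ⟨hadj, ha⟩, hdist⟩
    · subst hb
      left
      refine ⟨a, ⟨hadj, ?_⟩, rfl, rfl⟩
      simpa [SimpleGraph.dist_self] using hdist
    · subst ha
      right
      refine ⟨b, ⟨hadj, ?_⟩, rfl, rfl⟩
      simp only at hdist
      rw [hd] at hdist
      exact hdist
  · rintro (⟨z, ⟨hadj, hdz⟩, rfl, rfl⟩ | ⟨x, ⟨hadj, hdx⟩, rfl, rfl⟩)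
    · exact ⟨Or.inl ⟨hadj, rfl⟩, by simpa [SimpleGraph.dist_self] using hdz⟩
    · refine ⟨Or.inr ⟨hadj, rfl⟩, ?_⟩
      simp only [SimpleGraph.dist_self]
      rw [hd]
      omega

lemma card_two_exhaust (h2 : Fintype.card V = 2) (z a b : V) (hab : a ≠ b) :
    z = a ∨ z = b := by
  classical
  by_contra hcon
  push_neg at hcon
  have hle : ({z, a, b} : Finset V).card ≤ 2 := h2 ▸ Finset.card_le_univ _
  rw [Finset.card_insert_of_notMem (by simp [hcon.1, hcon.2]),
    Finset.card_insert_of_notMem (by simp [hab])] at hle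
  simp at hle

lemma card_two_adj (h2 : Fintype.card V = 2) (hc : G.Connected) {a b : V} (hab : a ≠ b) :
    G.Adj a b := by
  obtain ⟨p⟩ := hc a b
  cases p with
  | nil => exact absurd rfl hab
  | @cons _ c _ h q =>
    rcases card_two_exhaust h2 c a b hab with rfl | rfl
    · exact (G.irrefl h).elim
    · exact h

lemma card_two_drg (h2 : Fintype.card V = 2) (hc : G.Connected) : IsDistanceRegular G := by
  refine ⟨hc, ?_⟩
  intro i hi1 hi2 j hj u v x y hduv hdxy
  have huv : u ≠ v := by rintro rfl; rw [SimpleGraph.dist_self] at hduv; omega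
  have hxy : x ≠ y := by rintro rfl; rw [SimpleGraph.dist_self] at hdxy; omega
  have hset : ∀ a b : V, a ≠ b → {w : V | G.Adj b w ∧ G.dist a w = j}
      = {w : V | w = a ∧ j = 0} := by
    intro a b hab
    ext z
    simp only [Set.mem_setOf_eq]
    constructor
    · rintro ⟨hadj, hdz⟩
      rcases card_two_exhaust h2 z a b hab with rfl | rfl
      · rw [SimpleGraph.dist_self] at hdz; exact ⟨rfl, hdz.symm⟩
      · exact (G.irrefl hadj).elim
    · rintro ⟨rfl, rfl⟩
      exact ⟨card_two_adj h2 hc hab.symm, SimpleGraph.dist_self⟩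
  rw [hset u v huv, hset x y hxy]
  rcases eq_or_ne j 0 with rfl | hj0
  · simp
  · simp [hj0]

lemma hr_boxProd (hGconn : G.Connected) (hHconn : H.Connected)
    (hGhr : IsHighlyRegular G) (hHhr : IsHighlyRegular H)
    (hGnd : ¬ IsDistanceRegular G) : IsHighlyRegular (G.boxProd H) := by
  obtain ⟨m, C, hm2, hmlt, hPall⟩ := hGhr
  obtain ⟨k, D, hk2, hklt, hQall⟩ := hHhr
  have hm : m < Fintype.card V := by
    rcases hmlt with h | ⟨_, h2⟩
    · exact h
    · exact absurd (card_two_drg h2 hGconn) hGnd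
  have hk : k ≤ Fintype.card W := by rcases hklt with h | ⟨h, _⟩ <;> omega
  have hkpos : 0 < k := by omega
  refine ⟨m * k, fun s t =>
    (if (finProdFinEquiv.symm t).2 = (finProdFinEquiv.symm s).2 then
      C (finProdFinEquiv.symm s).1 (finProdFinEquiv.symm t).1 else 0) +
    (if (finProdFinEquiv.symm t).1 = (finProdFinEquiv.symm s).1 then
      D (finProdFinEquiv.symm s).2 (finProdFinEquiv.symm t).2 else 0), ?_, ?_, ?_⟩
  · have : 2 * 2 ≤ m * k := Nat.mul_le_mul hm2 hk2
    omega
  · left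
    rw [Fintype.card_prod]
    calc m * k < Fintype.card V * k := (Nat.mul_lt_mul_right hkpos).mpr hm
      _ ≤ Fintype.card V * Fintype.card W := Nat.mul_le_mul_left _ hk
  · rintro ⟨u, w⟩
    obtain ⟨P, hP0, hPsur, hPcnt⟩ := hPall u
    obtain ⟨Q, hQ0, hQsur, hQcnt⟩ := hQall w
    refine ⟨fun p => finProdFinEquiv (P p.1, Q p.2), ?_, ?_, ?_⟩
    · intro p
      rw [finProdFinEquiv_apply_val]
      constructor
      · intro h
        have hq : (Q p.2 : ℕ) = 0 := Nat.eq_zero_of_add_eq_zero_right h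
        have hp' : k * (P p.1 : ℕ) = 0 := Nat.eq_zero_of_add_eq_zero_left h
        have hp : (P p.1 : ℕ) = 0 := by
          rcases Nat.mul_eq_zero.mp hp' with h' | h' <;> omega
        have h1 := (hP0 p.1).mp hp
        have h2 := (hQ0 p.2).mp hq
        exact Prod.ext h1 h2
      · rintro rfl
        have h1 := (hP0 u).mpr rfl
        have h2 := (hQ0 w).mpr rfl
        simp [h1, h2]
    · intro t
      obtain ⟨v, hv⟩ := hPsur (finProdFinEquiv.symm t).1
      obtain ⟨x, hx⟩ := hQsur (finProdFinEquiv.symm t).2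
      refine ⟨(v, x), ?_⟩
      show finProdFinEquiv (P v, Q x) = t
      rw [hv, hx, Prod.mk.eta, Equiv.apply_symm_apply]
    · intro s t y hyt
      beta_reduce
      simp only [finProdFinEquiv_symm_apply]
      have hsymm : (P y.1, Q y.2) = finProdFinEquiv.symm t := by
        rw [← hyt, Equiv.symm_apply_apply]
      rw [finProdFinEquiv_symm_apply, Prod.ext_iff] at hsymm
      obtain ⟨hy1, hy2⟩ := hsymm
      simp only at hy1 hy2
      have hsplit : {z : V × W | finProdFinEquiv (P z.1, Q z.2) = s ∧
            (G.boxProd H).Adj y z}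
          = ((fun z1 => ((z1, y.2) : V × W)) ''
              {z1 | P z1 = s.divNat ∧ G.Adj y.1 z1 ∧ Q y.2 = s.modNat}) ∪
            ((fun z2 => ((y.1, z2) : V × W)) ''
              {z2 | Q z2 = s.modNat ∧ H.Adj y.2 z2 ∧ P y.1 = s.divNat}) := by
        ext ⟨a, b⟩
        simp only [Set.mem_setOf_eq, SimpleGraph.boxProd_adj, Set.mem_union, Set.mem_image,
          Prod.mk.injEq, Equiv.apply_eq_iff_eq_symm_apply, finProdFinEquiv_symm_apply,
          Prod.ext_iff]
        constructor
        · rintro ⟨⟨ha, hb⟩, ⟨hadj, heq⟩ | ⟨hadj, heq⟩⟩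
          · exact Or.inl ⟨a, ⟨ha, hadj, heq ▸ hb⟩, rfl, heq⟩
          · exact Or.inr ⟨b, ⟨hb, hadj, heq ▸ ha⟩, heq, rfl⟩
        · rintro (⟨z1, ⟨h1, h2, h3⟩, rfl, rfl⟩ | ⟨z2, ⟨h1, h2, h3⟩, rfl, rfl⟩)
          · exact ⟨⟨h1, h3⟩, Or.inl ⟨h2, rfl⟩⟩
          · exact ⟨⟨h3, h1⟩, Or.inr ⟨h2, rfl⟩⟩
      rw [hsplit, ncard_pair_union (by simp)]
      have hAcard : {z1 | P z1 = s.divNat ∧ G.Adj y.1 z1 ∧ Q y.2 = s.modNat}.ncard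
          = if t.modNat = s.modNat then C s.divNat t.divNat else 0 := by
        by_cases hA : Q y.2 = s.modNat
        · have hAset : {z1 | P z1 = s.divNat ∧ G.Adj y.1 z1 ∧ Q y.2 = s.modNat}
              = {z1 | P z1 = s.divNat ∧ G.Adj y.1 z1} := by
            ext z1; simp [hA]
          rw [hAset, hPcnt s.divNat t.divNat y.1 hy1, if_pos (hy2 ▸ hA)]
        · have hAset : {z1 | P z1 = s.divNat ∧ G.Adj y.1 z1 ∧ Q y.2 = s.modNat} = ∅ := by
            ext z1; simp [hA]
          rw [hAset, if_neg (by rw [← hy2]; exact hA)]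
          simp
      have hBcard : {z2 | Q z2 = s.modNat ∧ H.Adj y.2 z2 ∧ P y.1 = s.divNat}.ncard
          = if t.divNat = s.divNat then D s.modNat t.modNat else 0 := by
        by_cases hB : P y.1 = s.divNat
        · have hBset : {z2 | Q z2 = s.modNat ∧ H.Adj y.2 z2 ∧ P y.1 = s.divNat}
              = {z2 | Q z2 = s.modNat ∧ H.Adj y.2 z2} := by
            ext z2; simp [hB]
          rw [hBset, hQcnt s.modNat t.modNat y.2 hy2, if_pos (hy1 ▸ hB)]
        · have hBset : {z2 | Q z2 = s.modNat ∧ H.Adj y.2 z2 ∧ P y.1 = s.divNat} = ∅ := by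
            ext z2; simp [hB]
          rw [hBset, if_neg (by rw [← hy1]; exact hB)]
          simp
      rw [hAcard, hBcard]
end aux

/-- The Cartesian product of a connected highly-regular graph which is
not distance-regular with any connected highly-regular graph is a connected
highly-regular graph which is not distance-regular. -/
theorem stmt16 {V W : Type*} [Fintype V] [Fintype W]
    (G : SimpleGraph V) (H : SimpleGraph W)
    (hGconn : G.Connected) (hGhr : IsHighlyRegular G) (hGnd : ¬ IsDistanceRegular G)
    (hHconn : H.Connected) (hHhr : IsHighlyRegular H) :
    (G.boxProd H).Connected ∧ IsHighlyRegular (G.boxProd H) ∧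
      ¬ IsDistanceRegular (G.boxProd H) := by
  refine ⟨hGconn.boxProd hHconn, hr_boxProd hGconn hHconn hGhr hHhr hGnd, ?_⟩
  rintro ⟨hconn, hreg⟩
  apply hGnd
  refine ⟨hGconn, ?_⟩
  intro i hi1 hi2 j hj u v x y hduv hdxy
  obtain ⟨w0⟩ : Nonempty W := hHconn.nonempty
  have hdist1 : (G.boxProd H).dist (u, w0) (v, w0) = i := by
    rw [boxProd_dist hGconn hHconn]
    simp [SimpleGraph.dist_self, hduv]
  have hdist2 : (G.boxProd H).dist (x, w0) (y, w0) = i := by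
    rw [boxProd_dist hGconn hHconn]
    simp [SimpleGraph.dist_self, hdxy]
  have hidiam : i ≤ (G.boxProd H).diam := by
    have hne : (G.boxProd H).ediam ≠ ⊤ := by
      haveI : Nonempty V := hGconn.nonempty
      haveI : Nonempty W := hHconn.nonempty
      obtain ⟨p, q, hpq⟩ := SimpleGraph.exists_edist_eq_ediam_of_finite (G := G.boxProd H)
      rw [← hpq]
      exact SimpleGraph.edist_ne_top_iff_reachable.mpr ((hGconn.boxProd hHconn) p q)
    calc i = (G.boxProd H).dist (u, w0) (v, w0) := hdist1.symm
      _ ≤ _ := SimpleGraph.dist_le_diam hne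
  have key := hreg i hi1 hidiam j hj (u, w0) (v, w0) (x, w0) (y, w0) hdist1 hdist2
  rw [nbhd_split hGconn hHconn u v w0 i j hduv,
    nbhd_split hGconn hHconn x y w0 i j hdxy,
    ncard_pair_union (by simp), ncard_pair_union (by simp)] at key
  omega
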